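/- There exists an edge coloring of the complete graph K_{2m} (m ≥ 2) in which every vertex has color degree exactly m but which contains no properly colored Hamiltonian cycle. -/

import Mathlib

open Finset

/-- A properly colored cycle of length `L ≥ 3` in the edge-colored complete graph on
`Fin n` with coloring `c`, given by its vertex sequence `w 0, w 1, …, w (L-1)`. -/
def IsPCCycle (n : ℕ) (c : Fin n → Fin n → ℕ) (L : ℕ) (w : ℕ → Fin n) : Prop :=
  3 ≤ L ∧ (∀ i j, i < L → j < L → w i = w j → i = j) ∧
    ∀ i < L, c (w i) (w ((i + 1) % L)) ≠ c (w ((i + 1) % L)) (w ((i + 2) % L))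

/-- A properly colored path with `ℓ` vertices `v 1, v 2, …, v ℓ` (1-based indexing). -/
def IsPCPath (n : ℕ) (c : Fin n → Fin n → ℕ) (ℓ : ℕ) (v : ℕ → Fin n) : Prop :=
  (∀ i j, 1 ≤ i → i ≤ ℓ → 1 ≤ j → j ≤ ℓ → v i = v j → i = j) ∧
    ∀ i, 1 ≤ i → i + 2 ≤ ℓ → c (v i) (v (i + 1)) ≠ c (v (i + 1)) (v (i + 2))

/-- `Δ^mon(K_n^c) < k`: every vertex is incident with fewer than `k`
edges of any single color. -/
def MaxMonDegLT (n : ℕ) (c : Fin n → Fin n → ℕ) (k : ℕ) : Prop :=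
  ∀ v : Fin n, ∀ col : ℕ,
    ((Finset.univ.filter (fun u => u ≠ v ∧ c v u = col)).card) < k

/-- The Fujita–Magnant-style coloring of `K_{2m}`: vertices with value `< m` form
class `A`, the rest form class `B`.  Edges inside `A` get color `2^m`; an edge
from `A` to `b ∈ B` gets color `2^b`; an edge inside `B` between `b, b'` gets
color `2^b + 2^b'`. -/
def fmCol (m : ℕ) (u v : Fin (2*m)) : ℕ :=
  if u = v then 0
  else if u.val < m ∧ v.val < m then 2^m
  else (if u.val < m then 0 else 2^u.val) + (if v.val < m then 0 else 2^v.val)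

lemma fmCol_symm (m : ℕ) (u v : Fin (2*m)) : fmCol m u v = fmCol m v u := by
  unfold fmCol
  rcases eq_or_ne u v with rfl | h
  · rfl
  · rw [if_neg h, if_neg h.symm]
    by_cases h1 : u.val < m <;> by_cases h2 : v.val < m <;>
      simp [h1, h2, Nat.add_comm]

lemma fmCol_AA {m : ℕ} {u v : Fin (2*m)} (h : u ≠ v) (hu : u.val < m) (hv : v.val < m) :
    fmCol m u v = 2^m := by
  unfold fmCol; rw [if_neg h, if_pos ⟨hu, hv⟩]

lemma fmCol_AB {m : ℕ} {u v : Fin (2*m)} (hu : u.val < m) (hv : ¬ v.val < m) :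
    fmCol m u v = 2^v.val := by
  have h : u ≠ v := by intro e; exact hv (e ▸ hu)
  unfold fmCol
  rw [if_neg h, if_neg (by tauto), if_pos hu, if_neg hv, Nat.zero_add]

lemma fmCol_BA {m : ℕ} {u v : Fin (2*m)} (hu : ¬ u.val < m) (hv : v.val < m) :
    fmCol m u v = 2^u.val := by
  rw [fmCol_symm]; exact fmCol_AB hv hu

lemma fmCol_BB {m : ℕ} {u v : Fin (2*m)} (h : u ≠ v) (hu : ¬ u.val < m) (hv : ¬ v.val < m) :
    fmCol m u v = 2^u.val + 2^v.val := by
  unfold fmCol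
  rw [if_neg h, if_neg (by tauto), if_neg hu, if_neg hv]

/-- Every vertex has color degree exactly `m` in the coloring `fmCol m`. -/
lemma fmCol_deg (m : ℕ) (hm : 2 ≤ m) (v : Fin (2*m)) :
    ((Finset.univ.filter (fun u => u ≠ v)).image (fun u => fmCol m v u)).card = m := by
  have hpow : Function.Injective (fun k : ℕ => 2 ^ k) := Nat.pow_right_injective le_rfl
  by_cases hv : v.val < m
  · have himg : ((Finset.univ.filter (fun u => u ≠ v)).image (fun u => fmCol m v u))
        = (Finset.Ico m (2*m)).image (fun k => 2 ^ k) := by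
      ext x
      simp only [Finset.mem_image, Finset.mem_filter, Finset.mem_univ, true_and,
        Finset.mem_Ico]
      constructor
      · rintro ⟨u, hu, rfl⟩
        by_cases h1 : u.val < m
        · exact ⟨m, ⟨le_rfl, by omega⟩, (fmCol_AA (Ne.symm hu) hv h1).symm⟩
        · exact ⟨u.val, ⟨by omega, u.isLt⟩, (fmCol_AB hv h1).symm⟩
      · rintro ⟨k, ⟨hk1, hk2⟩, rfl⟩
        refine ⟨⟨k, hk2⟩, ?_, ?_⟩
        · intro e
          have : (⟨k, hk2⟩ : Fin (2*m)).val = v.val := by rw [e]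
          simp at this; omega
        · exact fmCol_AB hv (by simp; omega)
    rw [himg, Finset.card_image_of_injective _ hpow, Nat.card_Ico]
    omega
  · have himg : ((Finset.univ.filter (fun u => u ≠ v)).image (fun u => fmCol m v u))
        = insert (2 ^ v.val)
            (((Finset.Ico m (2*m)).erase v.val).image (fun k => 2 ^ v.val + 2 ^ k)) := by
      ext x
      simp only [Finset.mem_image, Finset.mem_filter, Finset.mem_univ, true_and,
        Finset.mem_insert, Finset.mem_erase, Finset.mem_Ico]
      constructor
      · rintro ⟨u, hu, rfl⟩
        by_cases h1 : u.val < m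
        · exact Or.inl (fmCol_BA hv h1)
        · refine Or.inr ⟨u.val, ⟨?_, by omega, u.isLt⟩, (fmCol_BB (Ne.symm hu) hv h1).symm⟩
          intro e
          exact hu (Fin.ext e)
      · rintro (rfl | ⟨k, ⟨hk0, hk1, hk2⟩, rfl⟩)
        · refine ⟨⟨0, by omega⟩, ?_, ?_⟩
          · intro e
            have : (0 : ℕ) = v.val := congrArg Fin.val e
            omega
          · exact fmCol_BA hv (by simp; omega)
        · refine ⟨⟨k, hk2⟩, ?_, ?_⟩
          · intro e
            have := congrArg Fin.val e
            simp at this; omega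
          · rw [fmCol_BB ?_ hv (by simp; omega)]
            intro e
            have := congrArg Fin.val e
            simp at this; omega
    rw [himg]
    rw [Finset.card_insert_of_notMem ?_, Finset.card_image_of_injective,
      Finset.card_erase_of_mem (by simp [Finset.mem_Ico]; omega), Nat.card_Ico]
    · omega
    · intro a b hab
      simp only at hab
      exact hpow (Nat.add_left_cancel hab)
    · simp only [Finset.mem_image]
      rintro ⟨k, _, he⟩
      have : 2 ^ k > 0 := Nat.pow_pos (by norm_num)
      omega

/-- next position around the cycle -/
def nxt (n i : ℕ) : ℕ := (i + 1) % n
/-- previous position around the cycle -/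
def prv (n i : ℕ) : ℕ := (i + (n - 1)) % n

lemma nxt_lt {n : ℕ} (hn : 0 < n) (i : ℕ) : nxt n i < n := Nat.mod_lt _ hn
lemma prv_lt {n : ℕ} (hn : 0 < n) (i : ℕ) : prv n i < n := Nat.mod_lt _ hn

lemma nxt_prv {n i : ℕ} (hn : 1 ≤ n) (hi : i < n) : nxt n (prv n i) = i := by
  unfold nxt prv
  rw [Nat.mod_add_mod]
  have : i + (n - 1) + 1 = i + n := by omega
  rw [this, Nat.add_mod_right, Nat.mod_eq_of_lt hi]

lemma prv_nxt {n i : ℕ} (hn : 1 ≤ n) (hi : i < n) : prv n (nxt n i) = i := by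
  unfold nxt prv
  rw [Nat.mod_add_mod]
  have : i + 1 + (n - 1) = i + n := by omega
  rw [this, Nat.add_mod_right, Nat.mod_eq_of_lt hi]

lemma nxt_ne {n i : ℕ} (hn : 2 ≤ n) (hi : i < n) : nxt n i ≠ i := by
  unfold nxt
  rcases Nat.lt_or_ge (i + 1) n with h | h
  · rw [Nat.mod_eq_of_lt h]; omega
  · have : i + 1 = n := by omega
    rw [this, Nat.mod_self]; omega

lemma prv_ne {n i : ℕ} (hn : 2 ≤ n) (hi : i < n) : prv n i ≠ i := by
  unfold prv
  rcases Nat.lt_or_ge (i + (n - 1)) n with h | h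
  · rw [Nat.mod_eq_of_lt h]; omega
  · have h2 : i + (n - 1) - n < n := by omega
    rw [Nat.mod_eq_sub_mod h, Nat.mod_eq_of_lt h2]; omega

/-- The coloring `fmCol m` admits no properly colored Hamiltonian cycle. -/
lemma fm_no_pc (m : ℕ) (hm : 2 ≤ m) :
    ¬ ∃ w : ℕ → Fin (2 * m), IsPCCycle (2 * m) (fmCol m) (2 * m) w := by
  rintro ⟨w, -, hinj, hPC⟩
  have hn0 : 0 < 2 * m := by omega
  have hn1 : 1 ≤ 2 * m := by omega
  have hn2 : 2 ≤ 2 * m := by omega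
  have einj : Function.Injective (fun i : Fin (2*m) => w i.val) := by
    intro i j h
    exact Fin.ext (hinj i.val j.val i.isLt j.isLt h)
  have esurj : Function.Surjective (fun i : Fin (2*m) => w i.val) :=
    Finite.injective_iff_surjective.mp einj
  -- reindexed PC condition
  have hP : ∀ i < 2*m, fmCol m (w (prv (2*m) i)) (w i) ≠ fmCol m (w i) (w (nxt (2*m) i)) := by
    intro i hi
    have h1 := hPC (prv (2*m) i) (prv_lt hn0 i)
    have e1 : (prv (2*m) i + 1) % (2*m) = i := nxt_prv hn1 hi
    have e2 : (prv (2*m) i + 2) % (2*m) = nxt (2*m) i := by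
      have h3 : prv (2*m) i + 2 = (prv (2*m) i + 1) + 1 := by omega
      rw [h3, ← Nat.mod_add_mod, e1]; rfl
    rw [e1, e2] at h1
    exact h1
  have wne_prv : ∀ i < 2*m, w (prv (2*m) i) ≠ w i := by
    intro i hi h
    exact prv_ne hn2 hi (hinj _ _ (prv_lt hn0 i) hi h)
  have wne_nxt : ∀ i < 2*m, w i ≠ w (nxt (2*m) i) := by
    intro i hi h
    exact (nxt_ne hn2 hi).symm (hinj _ _ hi (nxt_lt hn0 i) h)
  -- Key claim: no position has both neighbors in A
  have hK : ∀ i < 2*m, ¬ ((w (prv (2*m) i)).val < m ∧ (w (nxt (2*m) i)).val < m) := by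
    rintro i hi ⟨h1, h2⟩
    by_cases hw : (w i).val < m
    · exact hP i hi (by
        rw [fmCol_AA (wne_prv i hi) h1 hw, fmCol_AA (wne_nxt i hi) hw h2])
    · exact hP i hi (by
        rw [fmCol_AB h1 hw, fmCol_BA hw h2])
  -- counting
  have χsum : ∑ j ∈ Finset.range (2*m), (if (w j).val < m then 1 else 0) = m := by
    rw [← Finset.card_filter]
    have : ((Finset.range (2*m)).filter (fun j => (w j).val < m)).card
        = (Finset.range m).card := by
      apply Finset.card_bij (fun j _ => (w j).val)
      · intro a ha
        simp only [Finset.mem_filter] at ha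
        exact Finset.mem_range.mpr ha.2
      · intro a ha b hb h
        simp only [Finset.mem_filter, Finset.mem_range] at ha hb
        exact hinj a b ha.1 hb.1 (Fin.val_injective h)
      · intro b hb
        simp only [Finset.mem_range] at hb
        obtain ⟨i, hi⟩ := esurj ⟨b, by omega⟩
        simp only at hi
        refine ⟨i.val, ?_, ?_⟩
        · simp only [Finset.mem_filter, Finset.mem_range]
          exact ⟨i.isLt, by rw [hi]; exact hb⟩
        · rw [hi]
    rw [this, Finset.card_range]
  have sum_nxt : ∑ j ∈ Finset.range (2*m), (if (w (nxt (2*m) j)).val < m then 1 else 0)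
      = ∑ j ∈ Finset.range (2*m), (if (w j).val < m then 1 else 0) := by
    apply Finset.sum_nbij' (nxt (2*m)) (prv (2*m))
    · intro a _; exact Finset.mem_range.mpr (nxt_lt hn0 a)
    · intro a _; exact Finset.mem_range.mpr (prv_lt hn0 a)
    · intro a ha; exact prv_nxt hn1 (Finset.mem_range.mp ha)
    · intro a ha; exact nxt_prv hn1 (Finset.mem_range.mp ha)
    · intro a _; rfl
  have sum_prv : ∑ j ∈ Finset.range (2*m), (if (w (prv (2*m) j)).val < m then 1 else 0)
      = ∑ j ∈ Finset.range (2*m), (if (w j).val < m then 1 else 0) := by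
    apply Finset.sum_nbij' (prv (2*m)) (nxt (2*m))
    · intro a _; exact Finset.mem_range.mpr (prv_lt hn0 a)
    · intro a _; exact Finset.mem_range.mpr (nxt_lt hn0 a)
    · intro a ha; exact nxt_prv hn1 (Finset.mem_range.mp ha)
    · intro a ha; exact prv_nxt hn1 (Finset.mem_range.mp ha)
    · intro a _; rfl
  set f : ℕ → ℕ := fun j =>
    (if (w (prv (2*m) j)).val < m then 1 else 0)
      + (if (w (nxt (2*m) j)).val < m then 1 else 0) with hf
  have hfle : ∀ j ∈ Finset.range (2*m), f j ≤ 1 := by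
    intro j hj
    have := hK j (Finset.mem_range.mp hj)
    simp only [hf]
    by_cases h1 : (w (prv (2*m) j)).val < m <;> by_cases h2 : (w (nxt (2*m) j)).val < m <;>
      simp [h1, h2] at this ⊢
  have hfsum : ∑ j ∈ Finset.range (2*m), f j = 2*m := by
    simp only [hf]
    rw [Finset.sum_add_distrib, sum_prv, sum_nxt, χsum]
    omega
  have hfeq : ∀ j ∈ Finset.range (2*m), f j = 1 := by
    by_contra hc
    push_neg at hc
    obtain ⟨j0, hj0, hne⟩ := hc
    have hj00 : f j0 = 0 := by have := hfle j0 hj0; omega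
    have hsplit := Finset.sum_erase_add (Finset.range (2*m)) f hj0
    have hle : ∑ j ∈ (Finset.range (2*m)).erase j0, f j
        ≤ ((Finset.range (2*m)).erase j0).card • 1 :=
      Finset.sum_le_card_nsmul _ _ 1 (fun x hx => hfle x (Finset.mem_of_mem_erase hx))
    rw [Finset.card_erase_of_mem hj0, Finset.card_range] at hle
    simp only [smul_eq_mul, mul_one] at hle
    omega
  -- find the position of the special vertex b0 = ⟨m, _⟩
  obtain ⟨i0, hi0⟩ := esurj ⟨m, by omega⟩
  simp only at hi0
  have hi0lt : i0.val < 2*m := i0.isLt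
  have hb0 : ¬ (w i0.val).val < m := by rw [hi0]; simp
  have hfi0 := hfeq i0.val (Finset.mem_range.mpr hi0lt)
  simp only [hf] at hfi0
  by_cases hc1 : (w (nxt (2*m) i0.val)).val < m
  · -- j := nxt i0 is in A; its other neighbor is also in A
    have hjlt : nxt (2*m) i0.val < 2*m := nxt_lt hn0 _
    have hprvj : prv (2*m) (nxt (2*m) i0.val) = i0.val := prv_nxt hn1 hi0lt
    have hfj := hfeq (nxt (2*m) i0.val) (Finset.mem_range.mpr hjlt)
    simp only [hf] at hfj
    rw [hprvj] at hfj
    have hnj : (w (nxt (2*m) (nxt (2*m) i0.val))).val < m := by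
      by_cases h : (w (nxt (2*m) (nxt (2*m) i0.val))).val < m
      · exact h
      · simp [hb0, h] at hfj
    apply hP (nxt (2*m) i0.val) hjlt
    rw [hprvj, fmCol_BA (by rw [hi0]; simp) hc1,
      fmCol_AA (wne_nxt _ hjlt) hc1 hnj, hi0]
  · have hc2 : (w (prv (2*m) i0.val)).val < m := by
      by_cases h : (w (prv (2*m) i0.val)).val < m
      · exact h
      · simp [h, hc1] at hfi0
    have hjlt : prv (2*m) i0.val < 2*m := prv_lt hn0 _
    have hnxtj : nxt (2*m) (prv (2*m) i0.val) = i0.val := nxt_prv hn1 hi0lt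
    have hfj := hfeq (prv (2*m) i0.val) (Finset.mem_range.mpr hjlt)
    simp only [hf] at hfj
    rw [hnxtj] at hfj
    have hpj : (w (prv (2*m) (prv (2*m) i0.val))).val < m := by
      by_cases h : (w (prv (2*m) (prv (2*m) i0.val))).val < m
      · exact h
      · simp [hb0, h] at hfj
    apply hP (prv (2*m) i0.val) hjlt
    rw [hnxtj, fmCol_AA (wne_prv _ hjlt) hpj hc2,
      fmCol_AB hc2 (by rw [hi0]; simp), hi0]

/-- **Fujita–Magnant construction.** For every `m ≥ 2` there is an edge coloring of
`K_{2m}` in which every vertex has color degree exactly `m`, but which has no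
properly colored Hamiltonian cycle. -/
theorem fujita_magnant (m : ℕ) (hm : 2 ≤ m) :
    ∃ c : Fin (2 * m) → Fin (2 * m) → ℕ, (∀ u v, c u v = c v u) ∧
      (∀ v : Fin (2 * m),
        ((Finset.univ.filter (fun u => u ≠ v)).image (fun u => c v u)).card = m) ∧
      ¬ ∃ w : ℕ → Fin (2 * m), IsPCCycle (2 * m) c (2 * m) w := by
  exact ⟨fmCol m, fmCol_symm m, fmCol_deg m hm, fm_no_pc m hm⟩
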